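/- For disjoint vertex subsets S and T with s = |S| ≥ 1 and t = |T| ≥ 2, the generalized cut inequality (s−t)·Σ_{i∈S} x_i + (t−s−1)·Σ_{i∈T} x_i − Σ_{ij∈E(S)} y_{ij} + Σ_{ij∈E(S:T)} y_{ij} − Σ_{ij∈E(T)} y_{ij} ≤ (t−s)(t−s−1)/2 holds for all binary x ∈ {0,1}^n with y_{ij} = x_i x_j. -/
import Mathlib

lemma bin_sum_nat {n : ℕ} (S : Finset (Fin n)) (x : Fin n → ℝ)
    (hx : ∀ a, x a = 0 ∨ x a = 1) :
    ∃ A : ℕ, (∑ i ∈ S, x i) = (A : ℝ) := by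
  classical
  refine ⟨(S.filter fun i => x i = 1).card, ?_⟩
  rw [← Finset.sum_boole]
  refine Finset.sum_congr rfl fun i _ => ?_
  rcases hx i with h | h <;> simp [h]

lemma pair_sum {n : ℕ} (S : Finset (Fin n)) (x : Fin n → ℝ)
    (hx : ∀ a, x a = 0 ∨ x a = 1) :
    2 * (∑ i ∈ S, ∑ j ∈ S, if i < j then x i * x j else 0)
      = (∑ i ∈ S, x i) ^ 2 - (∑ i ∈ S, x i) := by
  classical
  have hsq : (∑ i ∈ S, x i) ^ 2 = ∑ i ∈ S, ∑ j ∈ S, x i * x j := by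
    rw [sq, Finset.sum_mul_sum]
  have hkey : ∀ i j : Fin n, x i * x j
      = (if i < j then x i * x j else 0) + (if j < i then x i * x j else 0)
        + (if i = j then x i * x j else 0) := by
    intro i j
    rcases lt_trichotomy i j with h | h | h
    · simp [h, asymm h, h.ne]
    · simp [h, lt_irrefl]
    · simp [h, asymm h, h.ne']
  have hsplit : ∑ i ∈ S, ∑ j ∈ S, x i * x j
      = (∑ i ∈ S, ∑ j ∈ S, if i < j then x i * x j else 0)
        + (∑ i ∈ S, ∑ j ∈ S, if j < i then x i * x j else 0)
        + (∑ i ∈ S, ∑ j ∈ S, if i = j then x i * x j else 0) := by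
    rw [← Finset.sum_add_distrib, ← Finset.sum_add_distrib]
    refine Finset.sum_congr rfl fun i _ => ?_
    rw [← Finset.sum_add_distrib, ← Finset.sum_add_distrib]
    exact Finset.sum_congr rfl fun j _ => hkey i j
  have hswap : (∑ i ∈ S, ∑ j ∈ S, if j < i then x i * x j else 0)
      = ∑ i ∈ S, ∑ j ∈ S, if i < j then x i * x j else 0 := by
    rw [Finset.sum_comm]
    exact Finset.sum_congr rfl fun i _ => Finset.sum_congr rfl fun j _ => by
      rw [mul_comm]
  have hdiag : (∑ i ∈ S, ∑ j ∈ S, if i = j then x i * x j else 0) = ∑ i ∈ S, x i := by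
    refine Finset.sum_congr rfl fun i hi => ?_
    have h1 : (∑ j ∈ S, if i = j then x i * x j else 0) = x i * x i := by
      simp [Finset.sum_ite_eq, hi]
    rw [h1]; rcases hx i with h | h <;> simp [h]
  rw [hsq, hsplit, hswap, hdiag]; ring

theorem stmt12 (n : ℕ) (S T : Finset (Fin n)) (hST : Disjoint S T)
    (hS : 1 ≤ S.card) (hT : 2 ≤ T.card)
    (x : Fin n → ℝ) (hx : ∀ a, x a = 0 ∨ x a = 1) :
    ((S.card : ℝ) - (T.card : ℝ)) * (∑ i ∈ S, x i)
      + ((T.card : ℝ) - (S.card : ℝ) - 1) * (∑ i ∈ T, x i)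
      - (∑ i ∈ S, ∑ j ∈ S, if i < j then x i * x j else 0)
      + (∑ i ∈ S, ∑ j ∈ T, x i * x j)
      - (∑ i ∈ T, ∑ j ∈ T, if i < j then x i * x j else 0)
      ≤ ((T.card : ℝ) - (S.card : ℝ)) * ((T.card : ℝ) - (S.card : ℝ) - 1) / 2 := by
  obtain ⟨A, hA⟩ := bin_sum_nat S x hx
  obtain ⟨B, hB⟩ := bin_sum_nat T x hx
  have hPS := pair_sum S x hx
  have hPT := pair_sum T x hx
  have hcross : (∑ i ∈ S, ∑ j ∈ T, x i * x j) = (∑ i ∈ S, x i) * (∑ j ∈ T, x j) := by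
    rw [Finset.sum_mul_sum]
  set m : ℤ := (B : ℤ) + (S.card : ℤ) - A - (T.card : ℤ) with hm
  have hmm : (0 : ℤ) ≤ m * (m + 1) := by
    rcases le_or_gt 0 m with h | h
    · nlinarith
    · nlinarith
  have hmmR : (0 : ℝ) ≤ ((B : ℝ) + (S.card : ℝ) - A - (T.card : ℝ))
      * ((B : ℝ) + (S.card : ℝ) - A - (T.card : ℝ) + 1) := by
    have := hmm
    have h2 : ((m * (m + 1) : ℤ) : ℝ) = ((B : ℝ) + (S.card : ℝ) - A - (T.card : ℝ))
        * ((B : ℝ) + (S.card : ℝ) - A - (T.card : ℝ) + 1) := by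
      push_cast [hm]; ring
    rw [← h2]; exact_mod_cast this
  rw [hcross, hA, hB] at *
  nlinarith [hPS, hPT, hmmR]
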